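/- Let q ≥ 2, a ≥ 1, and let {0} ⊊ C_a ⊆ C_{a−1} ⊆ … ⊆ C_1 ⊆ ℤ_qⁿ be a chain of nested q-ary linear codes with C_a nonzero. Let Γ = q^aℤⁿ + q^{a−1}σ(C_1) + … + q·σ(C_{a−1}) + σ(C_a) ⊆ ℤⁿ. Then the L_∞ minimum distance of Γ satisfies d_∞(Γ) = min{q^a, q^{a−1}·d_∞(C_1), q^{a−2}·d_∞(C_2), …, d_∞(C_a)}, where d_∞(C_ℓ) is the ∞-Lee minimum distance of C_ℓ. -/

import Mathlib

lemma lee_le_natAbs (q : ℕ) (hq : 2 ≤ q) (w : ℤ) (r : ZMod q)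
    (h : ((w : ℤ) : ZMod q) = r) : min r.val (q - r.val) ≤ w.natAbs := by
  haveI : NeZero q := ⟨by omega⟩
  have hr : r.val < q := ZMod.val_lt r
  have hd : (q : ℤ) ∣ w - (r.val : ℤ) := by
    apply (ZMod.intCast_zmod_eq_zero_iff_dvd _ q).mp
    push_cast
    simp [h, ZMod.natCast_val, ZMod.cast_id]
  obtain ⟨k, hk⟩ := hd
  rcases le_or_gt 0 k with hk0 | hk0
  · have h1 : (r.val : ℤ) ≤ w := by nlinarith
    omega
  · have h1 : w ≤ (r.val : ℤ) - q := by nlinarith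
    omega

lemma neg_val_sub_natAbs (q : ℕ) (hq : 2 ≤ q) (e : ZMod q) :
    ((((-e).val : ℤ)) - (((-e + -e).val : ℤ))).natAbs = min e.val (q - e.val) := by
  haveI : NeZero q := ⟨by omega⟩
  by_cases h0 : e = 0
  · subst h0; simp
  · have hs : 0 < e.val := by
      have h := (ZMod.val_eq_zero e).not.mpr h0
      omega
    have hlt : e.val < q := ZMod.val_lt e
    have h1 : (-e).val = q - e.val := by rw [ZMod.neg_val]; simp [h0]
    have h2 : (-e + -e).val = ((q - e.val) + (q - e.val)) % q := by
      rw [ZMod.val_add, h1]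
    rw [h1, h2]
    rcases lt_trichotomy (2 * e.val) q with h | h | h
    · have hm : ((q - e.val) + (q - e.val)) % q = q - 2 * e.val := by
        have he : (q - e.val) + (q - e.val) = q + (q - 2 * e.val) := by omega
        rw [he, Nat.add_mod_left, Nat.mod_eq_of_lt (by omega)]
      rw [hm]; omega
    · have hm : ((q - e.val) + (q - e.val)) % q = 0 := by
        have he : (q - e.val) + (q - e.val) = q := by omega
        rw [he, Nat.mod_self]
      rw [hm]; omega
    · have hm : ((q - e.val) + (q - e.val)) % q = (q - e.val) + (q - e.val) :=
        Nat.mod_eq_of_lt (by omega)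
      rw [hm]; omega

lemma sup_mul_nat (n k : ℕ) (f : Fin n → ℕ) :
    (Finset.univ.sup fun t => k * f t) = k * Finset.univ.sup f := by
  have h := Finset.comp_sup_eq_sup_comp (s := (Finset.univ : Finset (Fin n))) (f := f) (k * ·)
    (fun x y => by
      rcases le_total x y with h | h
      · simp [Nat.max_eq_right h, Nat.max_eq_right (Nat.mul_le_mul_left k h)]
      · simp [Nat.max_eq_left h, Nat.max_eq_left (Nat.mul_le_mul_left k h)])
    (by simp)
  exact h.symm

lemma chain_le (q a n : ℕ) (C : ℕ → Submodule (ZMod q) (Fin n → ZMod q))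
    (hnested : ∀ ℓ, 1 ≤ ℓ → ℓ < a → C (ℓ + 1) ≤ C ℓ) :
    ∀ m ℓ, 1 ≤ ℓ → ℓ ≤ m → m ≤ a → C m ≤ C ℓ := by
  intro m
  induction m with
  | zero => intro ℓ h1 h2 _; omega
  | succ k ih =>
    intro ℓ h1 h2 h3
    rcases Nat.eq_or_lt_of_le h2 with h | h
    · rw [h]
    · exact le_trans (hnested k (by omega) (by omega)) (ih ℓ h1 (by omega) (by omega))


/-- The `∞`-Lee minimum distance of a code `C ⊆ (ℤ/q)ⁿ`. -/
noncomputable def codeDistInf (q n : ℕ) (C : Set (Fin n → ZMod q)) : ℕ :=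
  sInf {d : ℕ | ∃ x ∈ C, ∃ y ∈ C, x ≠ y ∧
    d = Finset.univ.sup fun i => min ((x i - y i).val) (q - (x i - y i).val)}

/-- The `L_∞` minimum distance of a subset of `ℤⁿ`. -/
noncomputable def linfDistInt (n : ℕ) (S : Set (Fin n → ℤ)) : ℕ :=
  sInf {d : ℕ | ∃ x ∈ S, ∃ y ∈ S, x ≠ y ∧
    d = Finset.univ.sup fun i => (x i - y i).natAbs}

/-- The Construction D̄ set `Γ = q^a ℤⁿ + q^{a-1} σ(C 1) + ⋯ + σ(C a)`. -/
def gammaDbar (q a n : ℕ) (C : ℕ → Submodule (ZMod q) (Fin n → ZMod q)) :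
    Set (Fin n → ℤ) :=
  {v | ∃ z : Fin n → ℤ, ∃ c : ℕ → Fin n → ZMod q,
    (∀ ℓ, 1 ≤ ℓ → ℓ ≤ a → c ℓ ∈ C ℓ) ∧
    v = fun t => (q : ℤ) ^ a * z t
      + ∑ ℓ ∈ Finset.Icc 1 a, (q : ℤ) ^ (a - ℓ) * (((c ℓ) t).val : ℤ)}

/-- For a chain of nested `q`-ary codes `{0} ⊊ C_a ⊆ ⋯ ⊆ C_1 ⊆ ℤ_qⁿ`,
the `L_∞` minimum distance of the Construction D̄ set is
`min {q^a, q^{a-1} d_∞(C_1), …, d_∞(C_a)}`. -/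
theorem linfDist_gammaDbar (q a n : ℕ) (hq : 2 ≤ q) (ha : 1 ≤ a)
    (C : ℕ → Submodule (ZMod q) (Fin n → ZMod q))
    (hnested : ∀ ℓ, 1 ≤ ℓ → ℓ < a → C (ℓ + 1) ≤ C ℓ)
    (hCa : C a ≠ ⊥) :
    linfDistInt n (gammaDbar q a n C)
      = sInf (insert (q ^ a)
          {d : ℕ | ∃ ℓ ∈ Finset.Icc 1 a,
            d = q ^ (a - ℓ) * codeDistInf q n (C ℓ : Set (Fin n → ZMod q))}) := by
  haveI : NeZero q := ⟨by omega⟩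
  obtain ⟨e0, he0mem, he0⟩ := (Submodule.ne_bot_iff (C a)).mp hCa
  obtain ⟨t0, ht0⟩ : ∃ t, e0 t ≠ 0 := by
    by_contra hc; push_neg at hc
    exact he0 (funext fun t => hc t)
  haveI : Nonempty (Fin n) := ⟨t0⟩
  set Dset := {d : ℕ | ∃ x ∈ gammaDbar q a n C, ∃ y ∈ gammaDbar q a n C, x ≠ y ∧
    d = Finset.univ.sup fun i => (x i - y i).natAbs} with hDset
  set T := insert (q ^ a) {d : ℕ | ∃ ℓ ∈ Finset.Icc 1 a,
    d = q ^ (a - ℓ) * codeDistInf q n (C ℓ : Set (Fin n → ZMod q))} with hT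
  -- T ⊆ Dset
  have hTD : T ⊆ Dset := by
    intro d hd
    rcases Set.mem_insert_iff.mp hd with hd | hd
    · -- d = q^a
      subst hd
      refine ⟨fun _ => (q : ℤ)^a, ⟨fun _ => 1, fun _ => 0, fun ℓ _ _ => Submodule.zero_mem _, ?_⟩,
        fun _ => 0, ⟨fun _ => 0, fun _ => 0, fun ℓ _ _ => Submodule.zero_mem _, ?_⟩, ?_, ?_⟩
      · funext t; simp
      · funext t; simp
      · intro h
        have h2 := congrFun h t0
        have h3 : (0:ℤ) < (q:ℤ)^a := by
          have hq0 : (0:ℤ) < (q:ℤ) := by exact_mod_cast (by omega : 0 < q)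
          positivity
        exact (ne_of_gt h3) h2
      · rw [show (fun i : Fin n => ((q:ℤ)^a - 0).natAbs) = fun _ : Fin n => q^a by
          funext i; simp [Int.natAbs_pow]]
        rw [Finset.sup_const Finset.univ_nonempty]
    · obtain ⟨ℓ, hℓ, hdeq⟩ := hd
      obtain ⟨h1ℓ, hℓa⟩ := Finset.mem_Icc.mp hℓ
      have hCl : e0 ∈ C ℓ := chain_le q a n C hnested a ℓ h1ℓ hℓa le_rfl he0mem
      have hEne : {d : ℕ | ∃ x ∈ (C ℓ : Set (Fin n → ZMod q)), ∃ y ∈ (C ℓ : Set (Fin n → ZMod q)),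
          x ≠ y ∧ d = Finset.univ.sup fun i =>
            min ((x i - y i).val) (q - (x i - y i).val)}.Nonempty :=
        ⟨_, e0, hCl, 0, Submodule.zero_mem _, he0, rfl⟩
      have hmem := Nat.sInf_mem hEne
      obtain ⟨x, hx, y, hy, hxy, hDeq⟩ := hmem
      -- the two Γ points
      set u : Fin n → ℤ := fun t => (q:ℤ)^(a-ℓ) * (((-(x-y)) t).val : ℤ) with hu_def
      set w : Fin n → ℤ := fun t => (q:ℤ)^(a-ℓ) * (((-(x-y) + -(x-y)) t).val : ℤ) with hw_def
      have hsum : ∀ (v : Fin n → ZMod q), (fun t => (q : ℤ) ^ a * (0:ℤ)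
          + ∑ ℓ' ∈ Finset.Icc 1 a, (q : ℤ) ^ (a - ℓ') *
            ((((fun m => if m = ℓ then v else 0) ℓ') t).val : ℤ))
          = fun t => (q:ℤ)^(a-ℓ) * ((v t).val : ℤ) := by
        intro v
        funext t
        rw [mul_zero, zero_add]
        rw [Finset.sum_eq_single_of_mem ℓ hℓ]
        · simp
        · intro b _ hb
          simp [hb]
      have hu : u ∈ gammaDbar q a n C := by
        refine ⟨fun _ => 0, fun m => if m = ℓ then -(x-y) else 0, ?_, ?_⟩
        · intro ℓ' _ _
          by_cases h : ℓ' = ℓ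
          · simp only [h, if_pos rfl]
            exact Submodule.neg_mem _ (Submodule.sub_mem _ hx hy)
          · simp only [if_neg h]
            exact Submodule.zero_mem _
        · exact ((hsum (-(x-y))).symm : _)
      have hw : w ∈ gammaDbar q a n C := by
        refine ⟨fun _ => 0, fun m => if m = ℓ then -(x-y) + -(x-y) else 0, ?_, ?_⟩
        · intro ℓ' _ _
          by_cases h : ℓ' = ℓ
          · simp only [h, if_pos rfl]
            exact Submodule.add_mem _ (Submodule.neg_mem _ (Submodule.sub_mem _ hx hy))
              (Submodule.neg_mem _ (Submodule.sub_mem _ hx hy))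
          · simp only [if_neg h]
            exact Submodule.zero_mem _
        · exact ((hsum (-(x-y) + -(x-y))).symm : _)
      have hptw : ∀ i : Fin n, (u i - w i).natAbs
          = q^(a-ℓ) * min ((x i - y i).val) (q - (x i - y i).val) := by
        intro i
        have heq : u i - w i
            = (q:ℤ)^(a-ℓ) * ((((-(x-y)) i).val : ℤ) - (((-(x-y) + -(x-y)) i).val : ℤ)) := by
          rw [hu_def, hw_def]; ring
        rw [heq, Int.natAbs_mul]
        congr 1
        · have h3 := neg_val_sub_natAbs q hq ((x - y) i)
          simpa [Pi.neg_apply, Pi.add_apply, Pi.sub_apply] using h3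
      obtain ⟨i0, hi0⟩ := Function.ne_iff.mp hxy
      have hne0 : (u i0 - w i0).natAbs ≠ 0 := by
        rw [hptw i0]
        have hv0 : (x i0 - y i0) ≠ 0 := sub_ne_zero.mpr hi0
        have hvpos : 0 < (x i0 - y i0).val :=
          Nat.pos_of_ne_zero ((ZMod.val_eq_zero (x i0 - y i0)).not.mpr hv0)
        have hvlt : (x i0 - y i0).val < q := ZMod.val_lt _
        exact Nat.mul_ne_zero (pow_ne_zero _ (NeZero.ne q))
          (Nat.pos_iff_ne_zero.mp (lt_min hvpos (Nat.sub_pos_of_lt hvlt)))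
      refine ⟨u, hu, w, hw, ?_, ?_⟩
      · intro h
        apply hne0
        rw [h]; simp
      · rw [hdeq]
        rw [show (fun i : Fin n => (u i - w i).natAbs)
            = fun i => q^(a-ℓ) * min ((x i - y i).val) (q - (x i - y i).val) from funext hptw]
        rw [sup_mul_nat, ← hDeq]
        rfl
  -- Direction 1 : linfDistInt ≤ sInf T
  have hTne : T.Nonempty := ⟨q^a, Set.mem_insert _ _⟩
  have hDne : Dset.Nonempty := ⟨q^a, hTD (Set.mem_insert _ _)⟩
  have hdir1 : linfDistInt n (gammaDbar q a n C) ≤ sInf T := by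
    apply Nat.sInf_le
    exact hTD (Nat.sInf_mem hTne)
  -- Direction 2 : sInf T ≤ every element of Dset
  have hdir2 : ∀ d ∈ Dset, sInf T ≤ d := by
    rintro d ⟨u, ⟨z, c, hc, huz⟩, w, ⟨z', c', hc', hwz⟩, hne, hd⟩
    by_cases hcc : ∀ ℓ ∈ Finset.Icc 1 a, c ℓ = c' ℓ
    · -- codewords all equal : difference is q^a multiple
      obtain ⟨t1, ht1⟩ := Function.ne_iff.mp hne
      have hval : u t1 - w t1 = (q:ℤ)^a * (z t1 - z' t1) := by
        have hss : ∑ ℓ ∈ Finset.Icc 1 a, (q : ℤ) ^ (a - ℓ) * (((c ℓ) t1).val : ℤ)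
            = ∑ ℓ ∈ Finset.Icc 1 a, (q : ℤ) ^ (a - ℓ) * (((c' ℓ) t1).val : ℤ) :=
          Finset.sum_congr rfl (fun ℓ hℓ => by rw [hcc ℓ hℓ])
        simp only [huz, hwz]
        rw [hss]; ring
      have hzz : z t1 ≠ z' t1 := by
        intro h
        apply ht1
        have h4 := hval
        rw [h, sub_self, mul_zero, sub_eq_zero] at h4
        exact h4
      have hqa : (q:ℕ)^a ≤ (u t1 - w t1).natAbs := by
        rw [hval, Int.natAbs_mul]
        have h1 : ((q:ℤ)^a).natAbs = q^a := by simp [Int.natAbs_pow]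
        rw [h1]
        have h2 : 1 ≤ (z t1 - z' t1).natAbs := by
          have : z t1 - z' t1 ≠ 0 := sub_ne_zero.mpr hzz
          omega
        calc q^a = q^a * 1 := by ring
        _ ≤ q^a * (z t1 - z' t1).natAbs := Nat.mul_le_mul le_rfl h2
      have hsup : q^a ≤ d := by
        rw [hd]
        exact le_trans hqa (Finset.le_sup (f := fun i => (u i - w i).natAbs) (Finset.mem_univ t1))
      exact le_trans (Nat.sInf_le (Set.mem_insert _ _)) hsup
    · -- some codeword differs : take maximal such level
      push_neg at hcc
      set F := (Finset.Icc 1 a).filter (fun ℓ => c ℓ ≠ c' ℓ) with hF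
      have hFne : F.Nonempty := by
        obtain ⟨ℓ, hℓ, hne'⟩ := hcc
        exact ⟨ℓ, Finset.mem_filter.mpr ⟨hℓ, hne'⟩⟩
      set m := F.max' hFne with hm
      have hmF : m ∈ F := F.max'_mem hFne
      obtain ⟨hmIcc, hmne⟩ := Finset.mem_filter.mp hmF
      obtain ⟨h1m, hma⟩ := Finset.mem_Icc.mp hmIcc
      have hmax : ∀ ℓ ∈ Finset.Icc 1 a, m < ℓ → c ℓ = c' ℓ := by
        intro ℓ hℓ hlt
        by_contra hne'
        exact absurd (Finset.le_max' F ℓ (Finset.mem_filter.mpr ⟨hℓ, hne'⟩)) (by omega)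
      set W : Fin n → ℤ := fun t => (q:ℤ)^m * (z t - z' t)
        + ∑ ℓ ∈ Finset.Icc 1 m, (q:ℤ)^(m-ℓ) * (((c ℓ t).val : ℤ) - ((c' ℓ t).val : ℤ)) with hW
      have hkey : ∀ t, u t - w t = (q:ℤ)^(a-m) * W t := by
        intro t
        rw [huz, hwz]
        have hsplit : Finset.Icc 1 a = Finset.Icc 1 m ∪ Finset.Ioc m a := by
          ext i
          simp only [Finset.mem_union, Finset.mem_Icc, Finset.mem_Ioc]
          omega
        have hdisj : Disjoint (Finset.Icc 1 m) (Finset.Ioc m a) := by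
          rw [Finset.disjoint_left]
          intro i hi hj
          simp only [Finset.mem_Icc] at hi
          simp only [Finset.mem_Ioc] at hj
          omega
        have hIoc : ∀ (g : ℕ → Fin n → ZMod q), (∀ ℓ ∈ Finset.Ioc m a, g ℓ = c' ℓ) →
            ∑ ℓ ∈ Finset.Ioc m a, (q : ℤ) ^ (a - ℓ) * (((g ℓ) t).val : ℤ)
            = ∑ ℓ ∈ Finset.Ioc m a, (q : ℤ) ^ (a - ℓ) * (((c' ℓ) t).val : ℤ) := by
          intro g hg
          exact Finset.sum_congr rfl (fun ℓ hℓ => by rw [hg ℓ hℓ])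
        simp only [hsplit, Finset.sum_union hdisj]
        rw [hIoc c (fun ℓ hℓ => by
          obtain ⟨h1, h2⟩ := Finset.mem_Ioc.mp hℓ
          exact hmax ℓ (Finset.mem_Icc.mpr ⟨by omega, h2⟩) h1)]
        have hpow : (q:ℤ)^a = (q:ℤ)^(a-m) * (q:ℤ)^m := by
          rw [← pow_add]; congr 1; omega
        have hsum1 : ∀ (g : ℕ → Fin n → ZMod q),
            ∑ ℓ ∈ Finset.Icc 1 m, (q : ℤ) ^ (a - ℓ) * (((g ℓ) t).val : ℤ)
            = (q:ℤ)^(a-m) * ∑ ℓ ∈ Finset.Icc 1 m, (q:ℤ)^(m-ℓ) * (((g ℓ) t).val : ℤ) := by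
          intro g
          rw [Finset.mul_sum]
          refine Finset.sum_congr rfl (fun ℓ hℓ => ?_)
          obtain ⟨h1, h2⟩ := Finset.mem_Icc.mp hℓ
          rw [← mul_assoc, ← pow_add]
          congr 2
          omega
        rw [hsum1 c, hsum1 c']
        simp only [hW]
        have hsub : ∑ ℓ ∈ Finset.Icc 1 m, (q:ℤ)^(m-ℓ) * (((c ℓ t).val:ℤ) - ((c' ℓ t).val:ℤ))
            = (∑ ℓ ∈ Finset.Icc 1 m, (q:ℤ)^(m-ℓ) * ((c ℓ t).val:ℤ))
              - ∑ ℓ ∈ Finset.Icc 1 m, (q:ℤ)^(m-ℓ) * ((c' ℓ t).val:ℤ) := by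
          rw [← Finset.sum_sub_distrib]
          exact Finset.sum_congr rfl (fun ℓ _ => by ring)
        rw [hsub, hpow]
        ring
      have hcong : ∀ t : Fin n, ((W t : ℤ) : ZMod q) = (c m t - c' m t) := by
        intro t
        rw [hW]
        push_cast
        rw [Finset.sum_eq_single_of_mem m (Finset.mem_Icc.mpr ⟨h1m, le_rfl⟩)]
        · simp [ZMod.natCast_self, ZMod.natCast_val, ZMod.cast_id, zero_pow (by omega : m ≠ 0)]
        · intro b hb hbne
          obtain ⟨hb1, hb2⟩ := Finset.mem_Icc.mp hb
          have hmb : m - b ≠ 0 := by omega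
          push_cast
          simp [ZMod.natCast_self, zero_pow hmb]
      have hptw : ∀ t : Fin n, q^(a-m) * min ((c m t - c' m t).val) (q - (c m t - c' m t).val)
          ≤ (u t - w t).natAbs := by
        intro t
        rw [hkey t, Int.natAbs_mul]
        have h1 : ((q:ℤ)^(a-m)).natAbs = q^(a-m) := by simp [Int.natAbs_pow]
        rw [h1]
        exact Nat.mul_le_mul_left _ (lee_le_natAbs q hq (W t) _ (hcong t))
      -- D_m ≤ sup of Lee values
      have hDm : codeDistInf q n ((C m : Set (Fin n → ZMod q)))
          ≤ Finset.univ.sup fun t => min ((c m t - c' m t).val) (q - (c m t - c' m t).val) := by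
        apply Nat.sInf_le
        exact ⟨c m, hc m h1m hma, c' m, hc' m h1m hma, hmne, rfl⟩
      have hsup : q^(a-m) * codeDistInf q n ((C m : Set (Fin n → ZMod q))) ≤ d := by
        calc q^(a-m) * codeDistInf q n ((C m : Set (Fin n → ZMod q)))
            ≤ q^(a-m) * Finset.univ.sup fun t =>
              min ((c m t - c' m t).val) (q - (c m t - c' m t).val) :=
              Nat.mul_le_mul_left _ hDm
          _ = Finset.univ.sup fun t => q^(a-m) *
              min ((c m t - c' m t).val) (q - (c m t - c' m t).val) := (sup_mul_nat _ _ _).symm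
          _ ≤ Finset.univ.sup fun t => (u t - w t).natAbs :=
              Finset.sup_mono_fun (fun t _ => hptw t)
          _ = d := hd.symm
      refine le_trans (Nat.sInf_le ?_) hsup
      exact Set.mem_insert_iff.mpr (Or.inr ⟨m, hmIcc, rfl⟩)
  have hdir2' : sInf T ≤ linfDistInt n (gammaDbar q a n C) :=
    hdir2 _ (Nat.sInf_mem hDne)
  exact le_antisymm hdir1 hdir2'
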